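/- In ℝ², given positive samples x_i⁺ and negative samples x_j⁻ (all first coordinates of pairs distinct), let S be the finite set of critical slopes s_{ij} = −(x⁺_{i,2} − x⁻_{j,2})/(x⁺_{i,1} − x⁻_{j,1}). Then the AUC of w(s) = (s, 1), as a function of s, is constant on every open interval contained in ℝ \ S. In particular, AUC restricted to classifiers of the form (s,1) attains only finitely many values. -/

import Mathlib

open scoped RealInnerProductSpace BigOperators

noncomputable def AUC {np nn : ℕ} (xp : Fin np → EuclideanSpace ℝ (Fin 2))
    (xn : Fin nn → EuclideanSpace ℝ (Fin 2)) (w : EuclideanSpace ℝ (Fin 2)) : ℝ :=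
  (1 / ((np : ℝ) * (nn : ℝ))) *
    ∑ i : Fin np, ∑ j : Fin nn, if ⟪w, xp i⟫ > ⟪w, xn j⟫ then (1 : ℝ) else 0

lemma inner_ws (s : ℝ) (v x : EuclideanSpace ℝ (Fin 2)) (hv : v = ![s,1]) :
    ⟪v, x⟫ = s * x 0 + x 1 := by
  simp [PiLp.inner_apply, Fin.sum_univ_two, RCLike.inner_apply, hv]
  ring

lemma key_equiv (s d e : ℝ) (hd : d ≠ 0) :
    0 < s * d + e ↔ 0 < d * (s - (-e / d)) := by
  have h : d * (s - (-e / d)) = s * d + e := by field_simp; ring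
  rw [h]

theorem stmt_9 {np nn : ℕ} (hnp : 0 < np) (hnn : 0 < nn)
    (xp : Fin np → EuclideanSpace ℝ (Fin 2))
    (xn : Fin nn → EuclideanSpace ℝ (Fin 2))
    (hx : ∀ i j, xp i 0 ≠ xn j 0)
    (S : Set ℝ)
    (hS : S = {s | ∃ i j, s = -(xp i 1 - xn j 1) / (xp i 0 - xn j 0)})
    (w : ℝ → EuclideanSpace ℝ (Fin 2))
    (hw : ∀ s, w s = ![s, 1]) :
    (∀ a b : ℝ, Set.Ioo a b ⊆ Sᶜ →
      ∀ s ∈ Set.Ioo a b, ∀ s' ∈ Set.Ioo a b, AUC xp xn (w s) = AUC xp xn (w s')) ∧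
    (Set.range (fun s => AUC xp xn (w s))).Finite := by
  have hcond : ∀ s i j, (⟪w s, xp i⟫ > ⟪w s, xn j⟫ ↔
      0 < (xp i 0 - xn j 0) * (s - (-(xp i 1 - xn j 1) / (xp i 0 - xn j 0)))) := by
    intro s i j
    rw [inner_ws s (w s) (xp i) (hw s), inner_ws s (w s) (xn j) (hw s)]
    have hd : xp i 0 - xn j 0 ≠ 0 := sub_ne_zero.mpr (hx i j)
    have := key_equiv s (xp i 0 - xn j 0) (xp i 1 - xn j 1) hd
    constructor <;> intro h
    · exact this.mp (by linarith)
    · have := this.mpr h; linarith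
  constructor
  · intro a b hab s hs s' hs'
    unfold AUC
    congr 1
    apply Finset.sum_congr rfl
    intro i _
    apply Finset.sum_congr rfl
    intro j _
    have hd : xp i 0 - xn j 0 ≠ 0 := sub_ne_zero.mpr (hx i j)
    set s0 : ℝ := -(xp i 1 - xn j 1) / (xp i 0 - xn j 0) with hs0
    have hs0S : s0 ∈ S := by rw [hS]; exact ⟨i, j, rfl⟩
    have hnot : s0 ∉ Set.Ioo a b := fun h => (hab h) hs0S
    have hside : (s0 < s ↔ s0 < s') := by
      constructor <;> intro h <;> by_contra h' <;> push_neg at h'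
      · exact hnot ⟨lt_of_lt_of_le hs'.1 h', lt_trans h hs.2⟩
      · exact hnot ⟨lt_of_lt_of_le hs.1 h', lt_trans h hs'.2⟩
    have hside' : (s < s0 ↔ s' < s0) := by
      constructor <;> intro h <;> by_contra h' <;> push_neg at h'
      · exact hnot ⟨lt_trans hs.1 h, lt_of_le_of_lt h' hs'.2⟩
      · exact hnot ⟨lt_trans hs'.1 h, lt_of_le_of_lt h' hs.2⟩
    have hiff : (⟪w s, xp i⟫ > ⟪w s, xn j⟫) ↔ (⟪w s', xp i⟫ > ⟪w s', xn j⟫) := by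
      rw [hcond s i j, hcond s' i j]
      rcases lt_or_gt_of_ne hd with hneg | hpos
      · constructor <;> intro h
        · have h1 : s < s0 := by nlinarith
          have h2 : s' < s0 := hside'.mp h1
          nlinarith
        · have h1 : s' < s0 := by nlinarith
          have h2 : s < s0 := hside'.mpr h1
          nlinarith
      · constructor <;> intro h
        · have h1 : s0 < s := by nlinarith
          have h2 : s0 < s' := hside.mp h1
          nlinarith
        · have h1 : s0 < s' := by nlinarith
          have h2 : s0 < s := hside.mpr h1
          nlinarith
    simp only [hiff]
  · apply Set.Finite.subset ((Set.finite_Iic (np * nn)).image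
      (fun k : ℕ => (1 / ((np : ℝ) * (nn : ℝ))) * k))
    rintro _ ⟨s, rfl⟩
    refine ⟨∑ i : Fin np, ∑ j : Fin nn,
      if ⟪w s, xp i⟫ > ⟪w s, xn j⟫ then (1 : ℕ) else 0, ?_, ?_⟩
    · calc (∑ i : Fin np, ∑ j : Fin nn,
          if ⟪w s, xp i⟫ > ⟪w s, xn j⟫ then (1 : ℕ) else 0)
          ≤ ∑ _i : Fin np, ∑ _j : Fin nn, 1 := by
            apply Finset.sum_le_sum; intro i _
            apply Finset.sum_le_sum; intro j _
            split <;> simp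
        _ = np * nn := by simp [Finset.sum_const, Finset.card_univ]
    · unfold AUC
      congr 1
      push_cast
      rfl
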